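/- Let ω₊⁰ ≥ ω₋⁰ > 0 and b⁰ ∈ ℝ with ω₊⁰ ω₋⁰ = 4(b⁰)², and set δ := ω₊⁰ − ω₋⁰ > 0. Then the functions ω₋(t) = ω₋⁰ δ / (ω₊⁰ e^{4δt} − ω₋⁰), ω₊(t) = ω₊⁰ δ / (ω₊⁰ − ω₋⁰ e^{−4δt}), and b(t)² = (b⁰)² δ² e^{−4tδ} / (ω₊⁰ − ω₋⁰ e^{−4tδ})² solve the system ∂ₜω₋ = −16 b², ∂ₜω₊ = −16 b², ∂ₜb = −2(ω₋+ω₊) b on [0,∞) with the given initial data. -/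

import Mathlib

/-- Explicit solution `ω₋(t) = ω₋⁰δ/(ω₊⁰e^{4δt} − ω₋⁰)`. -/
noncomputable def w3m (w m : ℝ) (t : ℝ) : ℝ :=
  m * (w - m) / (w * Real.exp (4 * (w - m) * t) - m)

/-- Explicit solution `ω₊(t) = ω₊⁰δ/(ω₊⁰ − ω₋⁰e^{−4δt})`. -/
noncomputable def w3p (w m : ℝ) (t : ℝ) : ℝ :=
  w * (w - m) / (w - m * Real.exp (-(4 * (w - m) * t)))

/-- Explicit solution `b(t)` with `b(t)² = (b⁰)²δ²e^{−4tδ}/(ω₊⁰ − ω₋⁰e^{−4tδ})²`. -/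
noncomputable def b3 (w m b0 : ℝ) (t : ℝ) : ℝ :=
  b0 * (w - m) * Real.exp (-(2 * (w - m) * t)) / (w - m * Real.exp (-(4 * (w - m) * t)))

/-- Example of the flow when `ω₊⁰ω₋⁰ = 4(b⁰)²` and `δ := ω₊⁰ − ω₋⁰ > 0`: the explicit
functions `w3m`, `w3p`, `b3` solve `∂ₜω₋ = −16b²`, `∂ₜω₊ = −16b²`, `∂ₜb = −2(ω₋+ω₊)b`
on `[0,∞)` with the given initial data. -/
theorem stmt_3 (w m b0 : ℝ) (hm : 0 < m) (hwm : m ≤ w)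
    (hconstraint : w * m = 4 * b0 ^ 2) (hδ : 0 < w - m) :
    w3m w m 0 = m ∧ w3p w m 0 = w ∧ (b3 w m b0 0) ^ 2 = b0 ^ 2 ∧
      ∀ t ∈ Set.Ici (0 : ℝ),
        (b3 w m b0 t) ^ 2 =
            b0 ^ 2 * (w - m) ^ 2 * Real.exp (-(4 * t * (w - m))) /
              (w - m * Real.exp (-(4 * t * (w - m)))) ^ 2 ∧
          HasDerivAt (w3m w m) (-16 * (b3 w m b0 t) ^ 2) t ∧
          HasDerivAt (w3p w m) (-16 * (b3 w m b0 t) ^ 2) t ∧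
          HasDerivAt (b3 w m b0) (-2 * (w3m w m t + w3p w m t) * b3 w m b0 t) t := by
  have hw : 0 < w := lt_of_lt_of_le hm hwm
  refine ⟨?_, ?_, ?_, ?_⟩
  · simp [w3m, Real.exp_zero]
    field_simp
  · simp [w3p, Real.exp_zero]
    field_simp
  · simp [b3, Real.exp_zero]
    field_simp
  · intro t ht
    simp only [Set.mem_Ici] at ht
    have hE1 : 1 ≤ Real.exp (4 * (w - m) * t) := Real.one_le_exp (by positivity)
    have hEpos : 0 < Real.exp (4 * (w - m) * t) := Real.exp_pos _
    have hE2 : Real.exp (-(4 * (w - m) * t)) ≤ 1 := Real.exp_le_one_iff.mpr (by nlinarith)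
    have hE2pos : 0 < Real.exp (-(4 * (w - m) * t)) := Real.exp_pos _
    have hD1 : 0 < w * Real.exp (4 * (w - m) * t) - m := by nlinarith
    have hD2 : 0 < w - m * Real.exp (-(4 * (w - m) * t)) := by nlinarith
    have hEinv : Real.exp (-(4 * (w - m) * t)) = (Real.exp (4 * (w - m) * t))⁻¹ :=
      Real.exp_neg _
    have hkey : Real.exp (-(2 * (w - m) * t)) ^ 2 = Real.exp (-(4 * (w - m) * t)) := by
      rw [sq, ← Real.exp_add]; ring_nf
    -- derivative of inner exponents
    have hlin : HasDerivAt (fun t : ℝ => 4 * (w - m) * t) (4 * (w - m)) t := by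
      simpa using (hasDerivAt_id t).const_mul (4 * (w - m))
    have hlin2 : HasDerivAt (fun t : ℝ => -(4 * (w - m) * t)) (-(4 * (w - m))) t := hlin.neg
    have hlin3 : HasDerivAt (fun t : ℝ => -(2 * (w - m) * t)) (-(2 * (w - m))) t := by
      exact (by simpa using (hasDerivAt_id t).const_mul (2 * (w - m)) : HasDerivAt (fun t : ℝ => 2 * (w - m) * t) (2 * (w - m)) t).neg
    have hexp1 : HasDerivAt (fun t : ℝ => Real.exp (4 * (w - m) * t))
        (Real.exp (4 * (w - m) * t) * (4 * (w - m))) t := hlin.exp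
    have hexp2 : HasDerivAt (fun t : ℝ => Real.exp (-(4 * (w - m) * t)))
        (Real.exp (-(4 * (w - m) * t)) * (-(4 * (w - m)))) t := hlin2.exp
    have hexp3 : HasDerivAt (fun t : ℝ => Real.exp (-(2 * (w - m) * t)))
        (Real.exp (-(2 * (w - m) * t)) * (-(2 * (w - m)))) t := hlin3.exp
    have hden1 : HasDerivAt (fun t : ℝ => w * Real.exp (4 * (w - m) * t) - m)
        (w * (Real.exp (4 * (w - m) * t) * (4 * (w - m)))) t := by
      simpa using (hexp1.const_mul w).sub_const m
    have hden2 : HasDerivAt (fun t : ℝ => w - m * Real.exp (-(4 * (w - m) * t)))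
        (-(m * (Real.exp (-(4 * (w - m) * t)) * (-(4 * (w - m)))))) t := by
      simpa using (hexp2.const_mul m).const_sub w
    refine ⟨?_, ?_, ?_, ?_⟩
    · simp only [b3, div_pow, mul_pow, hkey]
      ring_nf
    · have h := (hasDerivAt_const t (m * (w - m))).div hden1 hD1.ne'
      convert h using 1
      · rfl
      · rfl
      · rfl
      simp only [b3, div_pow, mul_pow, hkey]
      rw [hEinv, show b0 ^ 2 = w * m / 4 by linarith]
      field_simp
      ring
    · have hnum : HasDerivAt (fun t : ℝ => w * (w - m)) 0 t := hasDerivAt_const _ _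
      have h := hnum.div hden2 hD2.ne'
      convert h using 1
      · rfl
      · rfl
      · rfl
      simp only [b3, div_pow, mul_pow, hkey]
      rw [hEinv, show b0 ^ 2 = w * m / 4 by linarith]
      field_simp
      ring
    · have hnum : HasDerivAt (fun t : ℝ => b0 * (w - m) * Real.exp (-(2 * (w - m) * t)))
        (b0 * (w - m) * (Real.exp (-(2 * (w - m) * t)) * (-(2 * (w - m))))) t :=
        hexp3.const_mul _
      have h := hnum.div hden2 hD2.ne'
      convert h using 1
      · rfl
      · rfl
      · rfl
      simp only [b3, w3m, w3p]
      rw [hEinv]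
      field_simp
      ring_nf
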